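/- Let g : ℝᵐ → ℝ ∪ {∞} be a polyhedral function and z̄ ∈ dom g. Then there exists r > 0 such that for every w ∈ T_{dom g}(z̄) with ‖w‖ ≤ r one has g(z̄ + w) = g(z̄) + dg(z̄)(w). In other words, near z̄ the polyhedral function agrees exactly with its first-order (subderivative) expansion along tangent directions. -/

import Mathlib

open Filter Topology Set Metric

noncomputable section

/-- A polyhedral convex set: a finite intersection of closed half-spaces. -/
def IsPolyhedralSet {E : Type*} [AddCommGroup E] [Module ℝ E] (C : Set E) : Prop :=
  ∃ (s : ℕ) (b : Fin s → (E →ₗ[ℝ] ℝ)) (β : Fin s → ℝ), C = {x | ∀ i, b i x ≤ β i}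

/-- A polyhedral function: proper (never `⊥`, somewhere finite) with polyhedral epigraph. -/
def IsPolyhedralFn {E : Type*} [AddCommGroup E] [Module ℝ E] (g : E → EReal) : Prop :=
  (∃ z, g z ≠ ⊤) ∧ (∀ z, g z ≠ ⊥) ∧
    IsPolyhedralSet {p : E × ℝ | g p.1 ≤ (p.2 : EReal)}

/-- Tangent cone to a convex set: closure of the cone of feasible directions. -/
def tcone {E : Type*} [NormedAddCommGroup E] [NormedSpace ℝ E] (C : Set E) (x : E) : Set E :=
  closure {w | ∃ t : ℝ, 0 < t ∧ x + t • w ∈ C}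

/-- Convex subdifferential of an extended-real-valued function. -/
def subdiff {E : Type*} [NormedAddCommGroup E] [InnerProductSpace ℝ E]
    (g : E → EReal) (z : E) : Set E :=
  {v | ∀ x, g z + ((inner ℝ v (x - z) : ℝ) : EReal) ≤ g x}

/-- Subderivative: `dg(z)(w) = liminf_{t↓0, w'→w} (g(z+tw')-g(z))/t`. -/
def subderiv {E : Type*} [NormedAddCommGroup E] [NormedSpace ℝ E]
    (g : E → EReal) (z : E) (w : E) : EReal :=
  Filter.liminf (fun p : ℝ × E => (g (z + p.1 • p.2) - g z) * (((p.1)⁻¹ : ℝ) : EReal))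
    ((nhdsWithin 0 (Set.Ioi (0 : ℝ))) ×ˢ 𝓝 w)

/-- Critical cone `K_g(z,v) = {w | dg(z)(w) = ⟨v,w⟩}`. -/
def Kcone {E : Type*} [NormedAddCommGroup E] [InnerProductSpace ℝ E]
    (g : E → EReal) (z v : E) : Set E :=
  {w | subderiv g z w = ((inner ℝ v w : ℝ) : EReal)}

/-- Normal cone of convex analysis. -/
def ncone {E : Type*} [NormedAddCommGroup E] [InnerProductSpace ℝ E]
    (C : Set E) (x : E) : Set E :=
  {v | ∀ y ∈ C, (inner ℝ v (y - x) : ℝ) ≤ 0}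

/-- A set is a linear subspace. -/
def IsLinSubspace {E : Type*} [AddCommGroup E] [Module ℝ E] (K : Set E) : Prop :=
  ∃ S : Submodule ℝ E, K = ↑S

/-- Polar cone. -/
def polarCone {E : Type*} [NormedAddCommGroup E] [InnerProductSpace ℝ E] (K : Set E) : Set E :=
  {u | ∀ w ∈ K, (inner ℝ u w : ℝ) ≤ 0}

/-- Fenchel conjugate. -/
def fconj {E : Type*} [NormedAddCommGroup E] [InnerProductSpace ℝ E]
    (g : E → EReal) (v : E) : EReal :=
  ⨆ z, ((inner ℝ v z : ℝ) : EReal) - g z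

/-- Bouligand (contingent) tangent cone, via sequences. -/
def btcone {E : Type*} [NormedAddCommGroup E] [NormedSpace ℝ E] (Ω : Set E) (x : E) : Set E :=
  {w | ∃ (t : ℕ → ℝ) (v : ℕ → E), (∀ n, 0 < t n) ∧ Tendsto t atTop (𝓝 0) ∧
      Tendsto v atTop (𝓝 w) ∧ ∀ n, x + t n • v n ∈ Ω}

/-- Clarke (regular) tangent cone, via sequences. -/
def clarkeT {E : Type*} [NormedAddCommGroup E] [NormedSpace ℝ E] (Ω : Set E) (xb : E) : Set E :=
  {w | ∀ (x : ℕ → E) (t : ℕ → ℝ), (∀ n, x n ∈ Ω) → Tendsto x atTop (𝓝 xb) →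
      (∀ n, 0 < t n) → Tendsto t atTop (𝓝 0) →
      ∃ v : ℕ → E, Tendsto v atTop (𝓝 w) ∧ ∀ n, x n + t n • v n ∈ Ω}

/-- Paratingent cone, via sequences. -/
def paraT {E : Type*} [NormedAddCommGroup E] [NormedSpace ℝ E] (Ω : Set E) (xb : E) : Set E :=
  {w | ∃ (x : ℕ → E) (t : ℕ → ℝ) (v : ℕ → E), (∀ n, x n ∈ Ω) ∧ Tendsto x atTop (𝓝 xb) ∧
      (∀ n, 0 < t n) ∧ Tendsto t atTop (𝓝 0) ∧ Tendsto v atTop (𝓝 w) ∧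
      ∀ n, x n + t n • v n ∈ Ω}


lemma ereal_eq_of_le_iff {x : EReal} (hx : x ≠ ⊥) {M : ℝ} (h : ∀ α : ℝ, x ≤ (α:EReal) ↔ M ≤ α) :
    x = (M:EReal) := by
  have h1 : x ≤ (M:EReal) := (h M).mpr le_rfl
  have hxt : x ≠ ⊤ := fun ht => by simp [ht] at h1
  lift x to ℝ using ⟨hxt, hx⟩
  have h2 : M ≤ x := (h x).mp le_rfl
  exact_mod_cast le_antisymm h1 (by exact_mod_cast h2)

/-- a polyhedral function agrees with its first-order expansion along
tangent directions near the base point. -/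
theorem stmt4 {m : ℕ} (g : EuclideanSpace ℝ (Fin m) → EReal) (hg : IsPolyhedralFn g)
    (zb : EuclideanSpace ℝ (Fin m)) (hz : g zb ≠ ⊤) :
    ∃ r > (0 : ℝ), ∀ w ∈ tcone {z | g z ≠ ⊤} zb, ‖w‖ ≤ r →
      g (zb + w) = g zb + subderiv g zb w := by
  classical
  obtain ⟨⟨z0, hz0⟩, hbot, s, b, β, hepi⟩ := hg
  let a : Fin s → EuclideanSpace ℝ (Fin m) →L[ℝ] ℝ :=
    fun i => LinearMap.toContinuousLinearMap ((b i).comp (LinearMap.inl ℝ _ ℝ))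
  let c : Fin s → ℝ := fun i => b i (0, 1)
  have hb : ∀ i z (α : ℝ), b i (z, α) = a i z + α * c i := by
    intro i z α
    have hzα : ((z, α) : _ × ℝ) = ((z, (0:ℝ)) : _ × ℝ) + α • ((0 : EuclideanSpace ℝ (Fin m)), (1:ℝ)) := by
      simp [Prod.ext_iff]
    rw [hzα, map_add, map_smul]
    simp only [a, c, smul_eq_mul, LinearMap.coe_toContinuousLinearMap', LinearMap.coe_comp,
      Function.comp_apply, LinearMap.inl_apply]
  have key : ∀ z (α : ℝ), g z ≤ (α : EReal) ↔ ∀ i, a i z + α * c i ≤ β i := by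
    intro z α
    have h := Set.ext_iff.mp hepi (z, α)
    simp only [Set.mem_setOf_eq] at h
    rw [h]
    exact forall_congr' fun i => by rw [hb]
  obtain ⟨x0, hx0⟩ : ∃ x : ℝ, g z0 = (x : EReal) :=
    ⟨(g z0).toReal, (EReal.coe_toReal hz0 (hbot z0)).symm⟩
  have hc : ∀ i, c i ≤ 0 := by
    intro i
    by_contra hci
    push_neg at hci
    set α := max x0 ((β i - a i z0) / (c i) + 1) with hα
    have h1 : g z0 ≤ (α : EReal) := by
      rw [hx0]; exact_mod_cast le_max_left _ _
    have h2 := (key z0 α).mp h1 i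
    have h3 : (β i - a i z0) / (c i) + 1 ≤ α := le_max_right _ _
    have h4 : (β i - a i z0) / (c i) * c i = β i - a i z0 := div_mul_cancel₀ _ (ne_of_gt hci)
    nlinarith [mul_le_mul_of_nonneg_right h3 hci.le]
  let N : Finset (Fin s) := Finset.univ.filter fun i => c i < 0
  have hNmem : ∀ i, i ∈ N ↔ c i < 0 := by intro i; simp [N]
  have hN : N.Nonempty := by
    rcases Finset.eq_empty_or_nonempty N with hNe | hNe
    · exfalso
      have hcall : ∀ i, c i = 0 := by
        intro i
        rcases lt_or_eq_of_le (hc i) with h | h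
        · exact absurd ((hNmem i).mpr h) (by simp [hNe])
        · exact h
      have h1 : g z0 ≤ ((x0 - 1 : ℝ) : EReal) := by
        rw [key]
        intro i
        have h2 := (key z0 x0).mp (le_of_eq hx0) i
        simp only [hcall i, mul_zero, add_zero] at h2 ⊢
        exact h2
      rw [hx0] at h1
      have : x0 ≤ x0 - 1 := by exact_mod_cast h1
      linarith
    · exact hNe
  let φ : Fin s → EuclideanSpace ℝ (Fin m) → ℝ := fun i z => (β i - a i z) / c i
  have hφle : ∀ z (α:ℝ), (∀ i, c i = 0 → a i z ≤ β i) →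
      (g z ≤ (α:EReal) ↔ ∀ j ∈ N, φ j z ≤ α) := by
    intro z α hd
    rw [key]
    constructor
    · intro h j hj
      have hcj := (hNmem j).mp hj
      have h1 := h j
      rw [show φ j z = (β j - a j z) / c j from rfl, div_le_iff_of_neg hcj]
      linarith
    · intro h i
      rcases lt_or_eq_of_le (hc i) with hci | hci
      · have h1 := h i ((hNmem i).mpr hci)
        rw [show φ i z = (β i - a i z) / c i from rfl, div_le_iff_of_neg hci] at h1
        linarith
      · have h1 := hd i hci
        simpa [hci] using h1
  have hval : ∀ z, (∀ i, c i = 0 → a i z ≤ β i) →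
      g z = ((N.sup' hN fun j => φ j z : ℝ) : EReal) := by
    intro z hd
    apply ereal_eq_of_le_iff (hbot z)
    intro α
    rw [hφle z α hd, Finset.sup'_le_iff]
  have hdom : ∀ z, g z ≠ ⊤ ↔ (∀ i, c i = 0 → a i z ≤ β i) := by
    intro z
    constructor
    · intro hzt i hci
      have hxz : g z = (((g z).toReal : ℝ) : EReal) := (EReal.coe_toReal hzt (hbot z)).symm
      have h1 := (key z _).mp (le_of_eq hxz) i
      rw [hci, mul_zero, add_zero] at h1
      exact h1
    · intro hd; rw [hval z hd]; exact EReal.coe_ne_top _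
  have hDzb := (hdom zb).mp hz
  set M0 : ℝ := N.sup' hN fun j => φ j zb with hM0
  have hgzb : g zb = (M0 : EReal) := hval zb hDzb
  let L : Fin s → EuclideanSpace ℝ (Fin m) →L[ℝ] ℝ := fun i => (-(c i)⁻¹) • a i
  have hL : ∀ i w, L i w = (-(c i)⁻¹) * a i w := fun i w => rfl
  have hφlin : ∀ i, c i ≠ 0 → ∀ w, φ i (zb + w) = φ i zb + L i w := by
    intro i hci w
    rw [hL]
    show (β i - a i (zb + w)) / c i = (β i - a i zb) / c i + -(c i)⁻¹ * a i w
    rw [map_add]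
    field_simp
    ring
  let J : Finset (Fin s) := N.filter fun j => φ j zb = M0
  have hJ : J.Nonempty := by
    obtain ⟨j, hjN, hjeq⟩ := Finset.exists_mem_eq_sup' hN fun j => φ j zb
    exact ⟨j, Finset.mem_filter.mpr ⟨hjN, hjeq.symm⟩⟩
  obtain ⟨j1, hj1J⟩ := id hJ
  set S : EuclideanSpace ℝ (Fin m) → ℝ := fun w => J.sup' hJ fun j => L j w with hSdef
  have hSle : ∀ w j, j ∈ J → L j w ≤ S w := by
    intro w j hj
    simp only [hSdef]
    exact Finset.le_sup' (fun j => L j w) hj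
  have hStend : ∀ w, Tendsto S (𝓝 w) (𝓝 (S w)) := by
    intro w
    exact ContinuousAt.finset_sup'_apply hJ fun j _ => (L j).continuous.continuousAt
  have hSeq : ∀ v, S v = J.sup' hJ fun j => L j v := fun v => rfl
  have hShom : ∀ (t:ℝ), 0 < t → ∀ w, S (t • w) = t * S w := by
    intro t ht w
    apply le_antisymm
    · rw [hSeq]
      apply Finset.sup'_le; intro j hj
      have h1 : L j (t • w) = t * L j w := by rw [map_smul, smul_eq_mul]
      rw [h1]
      exact mul_le_mul_of_nonneg_left (hSle w j hj) ht.le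
    · obtain ⟨j, hjJ, hjeq⟩ := Finset.exists_mem_eq_sup' hJ fun j => L j w
      rw [show S w = L j w from hjeq]
      calc t * L j w = L j (t • w) := by rw [map_smul, smul_eq_mul]
        _ ≤ S (t • w) := hSle _ j hjJ
  have hev : ∀ᶠ w : EuclideanSpace ℝ (Fin m) in 𝓝 0,
      (∀ i, c i = 0 → a i zb < β i → a i zb + a i w ≤ β i) ∧
      (∀ j, j ∈ N → φ j zb < M0 → φ j zb + L j w ≤ M0 + L j1 w) := by
    apply Filter.Eventually.and
    · rw [eventually_all]
      intro i
      by_cases hlt : a i zb < β i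
      · have h1 : Tendsto (fun w => a i zb + a i w) (𝓝 0) (𝓝 (a i zb)) := by
          have h0 : Tendsto (fun w : EuclideanSpace ℝ (Fin m) => a i zb + a i w) (𝓝 0)
              (𝓝 (a i zb + a i 0)) := (continuous_const.add (a i).continuous).tendsto 0
          simpa using h0
        filter_upwards [h1.eventually_lt_const hlt] with w hw _ _
        exact hw.le
      · exact Eventually.of_forall fun w _ h2 => absurd h2 hlt
    · rw [eventually_all]
      intro j
      by_cases hjc : j ∈ N ∧ φ j zb < M0
      · have h1 : Tendsto (fun w => φ j zb + L j w - L j1 w) (𝓝 0) (𝓝 (φ j zb)) := by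
          have h0 : Tendsto (fun w : EuclideanSpace ℝ (Fin m) => φ j zb + L j w - L j1 w) (𝓝 0)
              (𝓝 (φ j zb + L j 0 - L j1 0)) :=
            ((continuous_const.add (L j).continuous).sub (L j1).continuous).tendsto 0
          simpa using h0
        filter_upwards [h1.eventually_lt_const hjc.2] with w hw _ _
        linarith
      · push_neg at hjc
        exact Eventually.of_forall fun w h1 h2 => absurd h2 (not_lt.mpr (hjc h1).ge).elim
  obtain ⟨ε, hε, hball⟩ := Metric.eventually_nhds_iff.mp hev
  have hmain : ∀ u : EuclideanSpace ℝ (Fin m),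
      (∀ i, c i = 0 → a i zb = β i → a i u ≤ 0) → ‖u‖ < ε →
      g (zb + u) = ((M0 + S u : ℝ) : EReal) := by
    intro u hTu hnu
    have huball := hball (show dist u 0 < ε by rwa [dist_zero_right])
    have hmemdom : ∀ i, c i = 0 → a i (zb + u) ≤ β i := by
      intro i hci
      rcases lt_or_eq_of_le (hDzb i hci) with hlt | heq
      · have h1 := huball.1 i hci hlt
        rw [map_add]; linarith
      · have h1 := hTu i hci heq
        rw [map_add]; linarith
    rw [hval _ hmemdom]
    norm_cast
    apply le_antisymm
    · apply Finset.sup'_le; intro j hjN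
      have hcj := ne_of_lt ((hNmem j).mp hjN)
      rw [hφlin j hcj u]
      rcases eq_or_lt_of_le (Finset.le_sup' (fun j => φ j zb) hjN : φ j zb ≤ M0) with heq | hlt
      · have hjJ : j ∈ J := Finset.mem_filter.mpr ⟨hjN, heq⟩
        have := hSle u j hjJ
        linarith
      · have h1 := huball.2 j hjN hlt
        have h2 := hSle u j1 hj1J
        linarith
    · obtain ⟨j, hjJ, hjeq⟩ := Finset.exists_mem_eq_sup' hJ fun j => L j u
      have hjN := (Finset.mem_filter.mp hjJ).1
      have hjact := (Finset.mem_filter.mp hjJ).2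
      calc M0 + S u = φ j zb + L j u := by
            rw [show S u = L j u from hjeq, hjact]
        _ = φ j (zb + u) := (hφlin j (ne_of_lt ((hNmem j).mp hjN)) u).symm
        _ ≤ _ := Finset.le_sup' (fun j => φ j (zb + u)) hjN
  refine ⟨ε/2, by linarith, ?_⟩
  intro w hw hwr
  have hTw : ∀ i, c i = 0 → a i zb = β i → a i w ≤ 0 := by
    have hclosed : IsClosed {u : EuclideanSpace ℝ (Fin m) |
        ∀ i, c i = 0 → a i zb = β i → a i u ≤ 0} := by
      have heq : {u : EuclideanSpace ℝ (Fin m) | ∀ i, c i = 0 → a i zb = β i → a i u ≤ 0} =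
          ⋂ i, {u | c i = 0 → a i zb = β i → a i u ≤ 0} := by
        ext u; simp [Set.mem_iInter]
      rw [heq]
      refine isClosed_iInter fun i => ?_
      by_cases h1 : c i = 0 ∧ a i zb = β i
      · have h2 : {u : EuclideanSpace ℝ (Fin m) | c i = 0 → a i zb = β i → a i u ≤ 0} =
            {u | a i u ≤ 0} := by
          ext u; simp [h1.1, h1.2]
        rw [h2]
        exact isClosed_le (a i).continuous continuous_const
      · have h2 : {u : EuclideanSpace ℝ (Fin m) | c i = 0 → a i zb = β i → a i u ≤ 0} =
            Set.univ := by
          ext u; simp only [Set.mem_setOf_eq, Set.mem_univ, iff_true]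
          intro hc1 hc2; exact absurd ⟨hc1, hc2⟩ h1
        rw [h2]; exact isClosed_univ
    have hsub : {u : EuclideanSpace ℝ (Fin m) | ∃ t:ℝ, 0 < t ∧ zb + t • u ∈ {z | g z ≠ ⊤}} ⊆
        {u | ∀ i, c i = 0 → a i zb = β i → a i u ≤ 0} := by
      rintro u ⟨t, ht, hmem⟩ i hci hact
      have h1 := ((hdom _).mp hmem) i hci
      rw [map_add, map_smul, smul_eq_mul] at h1
      have h2 : t * a i u ≤ 0 := by linarith
      exact le_of_not_gt fun hx => absurd h2 (not_le.mpr (mul_pos ht hx))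
    exact closure_minimal hsub hclosed hw
  have hεw : ‖w‖ < ε := by linarith
  have hsubv : subderiv g zb w = ((S w : ℝ) : EReal) := by
    have hq : subderiv g zb w = Filter.liminf
        (fun p : ℝ × EuclideanSpace ℝ (Fin m) =>
          (g (zb + p.1 • p.2) - g zb) * (((p.1)⁻¹ : ℝ) : EReal))
        ((𝓝[>] (0:ℝ)) ×ˢ 𝓝 w) := rfl
    rw [hq]
    apply le_antisymm
    · apply liminf_le_of_frequently_le'
      have htend : Tendsto (fun t : ℝ => ((t, w) : ℝ × EuclideanSpace ℝ (Fin m)))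
          (𝓝[>] (0:ℝ)) ((𝓝[>] (0:ℝ)) ×ˢ 𝓝 w) :=
        tendsto_id.prodMk tendsto_const_nhds
      apply htend.frequently
      apply Filter.Eventually.frequently
      have hδ : ∃ δ > (0:ℝ), ∀ t, 0 < t → t < δ → ‖t • w‖ < ε := by
        refine ⟨1 / (‖w‖ + 1), by positivity, ?_⟩
        intro t ht htδ
        rw [norm_smul, Real.norm_eq_abs, abs_of_pos ht]
        have h1 : ‖w‖ + 1 > 0 := by positivity
        have h2 : t * (‖w‖ + 1) < 1 := by
          rw [← lt_div_iff₀ h1]; exact htδ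
        nlinarith [norm_nonneg w, hε]
      obtain ⟨δ, hδ0, hδp⟩ := hδ
      filter_upwards [Ioo_mem_nhdsGT_of_mem (Set.left_mem_Ico.mpr hδ0)] with t ht
      have ht0 := ht.1
      have hTtw : ∀ i, c i = 0 → a i zb = β i → a i (t • w) ≤ 0 := by
        intro i h1 h2
        rw [map_smul, smul_eq_mul]
        have := hTw i h1 h2
        nlinarith
      rw [hmain (t • w) hTtw (hδp t ht0 ht.2), hShom t ht0 w, hgzb,
        ← EReal.coe_sub, ← EReal.coe_mul]
      apply EReal.coe_le_coe_iff.mpr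
      rw [add_sub_cancel_left, mul_comm t (S w), mul_assoc, mul_inv_cancel₀ (ne_of_gt ht0),
        mul_one]
    · have hlowev : ∀ᶠ p in (𝓝[>] (0:ℝ)) ×ˢ (𝓝 w : Filter (EuclideanSpace ℝ (Fin m))),
          ((S p.2 : ℝ) : EReal) ≤ (g (zb + p.1 • p.2) - g zb) * (((p.1)⁻¹ : ℝ) : EReal) := by
        filter_upwards [Filter.prod_mem_prod self_mem_nhdsWithin Filter.univ_mem] with p hp
        have ht0 : (0:ℝ) < p.1 := hp.1
        by_cases htop : g (zb + p.1 • p.2) = ⊤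
        · rw [htop, hgzb, EReal.top_sub_coe, EReal.top_mul_of_pos
            (EReal.coe_pos.mpr (inv_pos.mpr ht0))]
          exact le_top
        · have hd := (hdom _).mp htop
          rw [hval _ hd, hgzb, ← EReal.coe_sub, ← EReal.coe_mul]
          apply EReal.coe_le_coe_iff.mpr
          obtain ⟨j, hjJ, hjeq⟩ := Finset.exists_mem_eq_sup' hJ fun j => L j p.2
          have hjN := (Finset.mem_filter.mp hjJ).1
          have hjact := (Finset.mem_filter.mp hjJ).2
          have h1 : φ j (zb + p.1 • p.2) ≤ N.sup' hN fun i => φ i (zb + p.1 • p.2) :=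
            Finset.le_sup' (fun i => φ i (zb + p.1 • p.2)) hjN
          have h2 : φ j (zb + p.1 • p.2) = M0 + p.1 * L j p.2 := by
            rw [hφlin j (ne_of_lt ((hNmem j).mp hjN)), hjact, hL, hL, map_smul, smul_eq_mul]
            ring
          rw [show S p.2 = L j p.2 from hjeq, ← div_eq_mul_inv, le_div_iff₀ ht0]
          nlinarith
      calc ((S w : ℝ) : EReal)
          = liminf (fun p : ℝ × EuclideanSpace ℝ (Fin m) => ((S p.2 : ℝ) : EReal))
            ((𝓝[>] (0:ℝ)) ×ˢ 𝓝 w) := by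
            symm
            apply Filter.Tendsto.liminf_eq
            exact (continuous_coe_real_ereal.tendsto _).comp ((hStend w).comp tendsto_snd)
        _ ≤ _ := liminf_le_liminf hlowev
  rw [hmain w hTw hεw, hgzb, hsubv, ← EReal.coe_add]
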